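/- Sufficiency of the optimality conditions: If Z is dual feasible (Z ≥ 0 and Θ_i*(Z − p_iρ_i)Θ_i ≥ 0 for all i) and Π = {Π_i = Θ_iΔ_iΘ_i*} is primal feasible with ZΠ₀ = 0 and Θ_i*(Z − p_iρ_i)Θ_i Δ_i = 0 for all i, then Σ_i p_i Tr(ρ_iΠ_i) = Tr(Z), and hence Π achieves the maximum of the primal problem and Z the minimum of the dual problem. -/

import Mathlib

open Matrix ComplexOrder

lemma psd_trace_nonneg {k : Type*} [Fintype k] [DecidableEq k] {A : Matrix k k ℂ}
    (hA : A.PosSemidef) : 0 ≤ A.trace := by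
  exact hA.trace_nonneg

open scoped MatrixOrder in
lemma trace_mul_psd_nonneg {k : Type*} [Fintype k] [DecidableEq k]
    {A B : Matrix k k ℂ} (hA : A.PosSemidef) (hB : B.PosSemidef) :
    0 ≤ (A * B).trace := by
  have h : (A * B).trace = (CFC.sqrt B * A * CFC.sqrt B).trace := by
    conv_lhs => rw [← CFC.sqrt_mul_sqrt_self B hB.nonneg]
    rw [← Matrix.mul_assoc, Matrix.trace_mul_comm, ← Matrix.mul_assoc]
  rw [h]
  have := hA.mul_mul_conjTranspose_same (CFC.sqrt B)
  rw [(CFC.sqrt_nonneg B).posSemidef.isHermitian.eq] at this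
  exact psd_trace_nonneg this

lemma trace_conj_cycle {n k : ℕ} (T : Matrix (Fin n) (Fin k) ℂ)
    (M : Matrix (Fin n) (Fin n) ℂ) (D : Matrix (Fin k) (Fin k) ℂ) :
    ((Tᴴ * M * T) * D).trace = (M * (T * D * Tᴴ)).trace := by
  have h : Tᴴ * M * T * D = Tᴴ * (M * (T * D)) := by simp only [Matrix.mul_assoc]
  rw [h, Matrix.trace_mul_comm]
  simp only [Matrix.mul_assoc]

/-- The key trace identity underlying duality. -/
lemma key_identity (n m : ℕ) (r : Fin m → ℕ)
    (Θ : (i : Fin m) → Matrix (Fin n) (Fin (r i)) ℂ)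
    (Δ : (i : Fin m) → Matrix (Fin (r i)) (Fin (r i)) ℂ)
    (ρ : Fin m → Matrix (Fin n) (Fin n) ℂ) (p : Fin m → ℝ)
    (Z : Matrix (Fin n) (Fin n) ℂ) :
    Z.trace - ∑ i, (p i : ℂ) * (ρ i * (Θ i * Δ i * (Θ i)ᴴ)).trace
      = (Z * (1 - ∑ i, Θ i * Δ i * (Θ i)ᴴ)).trace
        + ∑ i, (((Θ i)ᴴ * (Z - (p i : ℂ) • ρ i) * Θ i) * Δ i).trace := by
  have hterm : ∀ i, (((Θ i)ᴴ * (Z - (p i : ℂ) • ρ i) * Θ i) * Δ i).trace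
      = (Z * (Θ i * Δ i * (Θ i)ᴴ)).trace
        - (p i : ℂ) * (ρ i * (Θ i * Δ i * (Θ i)ᴴ)).trace := by
    intro i
    rw [trace_conj_cycle, Matrix.sub_mul, Matrix.smul_mul, Matrix.trace_sub,
      Matrix.trace_smul, smul_eq_mul]
  have h0 : (Z * (1 - ∑ i, Θ i * Δ i * (Θ i)ᴴ)).trace
      = Z.trace - ∑ i, (Z * (Θ i * Δ i * (Θ i)ᴴ)).trace := by
    rw [Matrix.mul_sub, Matrix.mul_one, Matrix.trace_sub, Finset.mul_sum,
      Matrix.trace_sum]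
  simp only [hterm, h0, Finset.sum_sub_distrib]
  ring

/-- Weak duality. -/
lemma weak_duality (n m : ℕ) (r : Fin m → ℕ)
    (Θ : (i : Fin m) → Matrix (Fin n) (Fin (r i)) ℂ)
    (Δ : (i : Fin m) → Matrix (Fin (r i)) (Fin (r i)) ℂ)
    (ρ : Fin m → Matrix (Fin n) (Fin n) ℂ) (p : Fin m → ℝ)
    (Z : Matrix (Fin n) (Fin n) ℂ)
    (hZ : Z.PosSemidef)
    (hdual : ∀ i, ((Θ i)ᴴ * (Z - (p i : ℂ) • ρ i) * Θ i).PosSemidef)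
    (hΔ : ∀ i, (Δ i).PosSemidef)
    (hsum : (1 - ∑ i, Θ i * Δ i * (Θ i)ᴴ).PosSemidef) :
    ∑ i, p i * ((ρ i * (Θ i * Δ i * (Θ i)ᴴ)).trace).re ≤ (Z.trace).re := by
  have key := key_identity n m r Θ Δ ρ p Z
  have h1 : 0 ≤ (Z * (1 - ∑ i, Θ i * Δ i * (Θ i)ᴴ)).trace :=
    trace_mul_psd_nonneg hZ hsum
  have h2 : 0 ≤ ∑ i, (((Θ i)ᴴ * (Z - (p i : ℂ) • ρ i) * Θ i) * Δ i).trace :=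
    Finset.sum_nonneg fun i _ => trace_mul_psd_nonneg (hdual i) (hΔ i)
  have hre : 0 ≤ (Z.trace - ∑ i, (p i : ℂ) * (ρ i * (Θ i * Δ i * (Θ i)ᴴ)).trace).re := by
    rw [key]
    exact (Complex.le_def.mp (add_nonneg h1 h2)).1
  rw [Complex.sub_re, Complex.re_sum] at hre
  simp only [Complex.re_ofReal_mul] at hre
  linarith

theorem optimality_conditions_sufficient
    (n m : ℕ) (r : Fin m → ℕ)
    (Θ : (i : Fin m) → Matrix (Fin n) (Fin (r i)) ℂ)
    (Δ : (i : Fin m) → Matrix (Fin (r i)) (Fin (r i)) ℂ)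
    (ρ : Fin m → Matrix (Fin n) (Fin n) ℂ) (p : Fin m → ℝ)
    (Z : Matrix (Fin n) (Fin n) ℂ)
    (hΘ : ∀ i, (Θ i)ᴴ * Θ i = 1)
    (hρ : ∀ i, (ρ i).PosSemidef) (hρtr : ∀ i, (ρ i).trace = 1)
    (hp : ∀ i, 0 < p i)
    -- dual feasibility of Z
    (hZ : Z.PosSemidef)
    (hdual : ∀ i, ((Θ i)ᴴ * (Z - (p i : ℂ) • ρ i) * Θ i).PosSemidef)
    -- primal feasibility
    (hΔ : ∀ i, (Δ i).PosSemidef)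
    (hsum : (1 - ∑ i, Θ i * Δ i * (Θ i)ᴴ).PosSemidef)
    -- complementary slackness
    (hslack0 : Z * (1 - ∑ i, Θ i * Δ i * (Θ i)ᴴ) = 0)
    (hslack : ∀ i, ((Θ i)ᴴ * (Z - (p i : ℂ) • ρ i) * Θ i) * Δ i = 0) :
    -- the primal value equals the dual value
    (∑ i, p i * ((ρ i * (Θ i * Δ i * (Θ i)ᴴ)).trace).re = (Z.trace).re) ∧
    -- Π achieves the primal maximum
    (∀ Δ' : (i : Fin m) → Matrix (Fin (r i)) (Fin (r i)) ℂ,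
      (∀ i, (Δ' i).PosSemidef) →
      (1 - ∑ i, Θ i * Δ' i * (Θ i)ᴴ).PosSemidef →
      ∑ i, p i * ((ρ i * (Θ i * Δ' i * (Θ i)ᴴ)).trace).re ≤
        ∑ i, p i * ((ρ i * (Θ i * Δ i * (Θ i)ᴴ)).trace).re) ∧
    -- Z achieves the dual minimum
    (∀ Z' : Matrix (Fin n) (Fin n) ℂ, Z'.PosSemidef →
      (∀ i, ((Θ i)ᴴ * (Z' - (p i : ℂ) • ρ i) * Θ i).PosSemidef) →
      (Z.trace).re ≤ (Z'.trace).re) := by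
  have key := key_identity n m r Θ Δ ρ p Z
  have hzero : Z.trace - ∑ i, (p i : ℂ) * (ρ i * (Θ i * Δ i * (Θ i)ᴴ)).trace = 0 := by
    rw [key, hslack0, Matrix.trace_zero]
    simp only [hslack, Matrix.trace_zero, Finset.sum_const_zero, add_zero]
  have heq : ∑ i, p i * ((ρ i * (Θ i * Δ i * (Θ i)ᴴ)).trace).re = (Z.trace).re := by
    have := congrArg Complex.re hzero
    rw [Complex.sub_re, Complex.re_sum] at this
    simp only [Complex.re_ofReal_mul, Complex.zero_re] at this
    linarith
  refine ⟨heq, ?_, ?_⟩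
  · intro Δ' hΔ' hsum'
    rw [heq]
    exact weak_duality n m r Θ Δ' ρ p Z hZ hdual hΔ' hsum'
  · intro Z' hZ' hdual'
    rw [← heq]
    exact weak_duality n m r Θ Δ ρ p Z' hZ' hdual' hΔ hsum
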